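/- Every non-zero polynomial in the linear span of monomials t^{m_0}, …, t^{m_n} (with m_0 > ⋯ > m_n ≥ 0) has at most n strictly positive real roots, counted with multiplicity. -/

import Mathlib

open Polynomial

private lemma sum_count_le (s : Finset ℝ) (m : Multiset ℝ) :
    ∑ x ∈ s, m.count x ≤ Multiset.card m := by
  calc ∑ x ∈ s, m.count x ≤ ∑ x ∈ s ∪ m.toFinset, m.count x :=
        Finset.sum_le_sum_of_subset Finset.subset_union_left
    _ = ∑ x ∈ m.toFinset, m.count x := by
        refine (Finset.sum_subset Finset.subset_union_right ?_).symm
        intro x _ hx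
        rw [Multiset.count_eq_zero]
        exact fun h => hx (Multiset.mem_toFinset.2 h)
    _ = Multiset.card m := Multiset.toFinset_sum_count_eq m

/-- Positive-roots version of the interleaving lemma. -/
private lemma posA (p : ℝ[X]) :
    (p.roots.filter (fun x => 0 < x)).toFinset.card ≤
      (((derivative p).roots.filter (fun x => 0 < x)).toFinset \
        (p.roots.filter (fun x => 0 < x)).toFinset).card + 1 := by
  rcases eq_or_ne (derivative p) 0 with hp' | hp'
  · rw [eq_C_of_derivative_eq_zero hp', roots_C]
    simp
  have hp : p ≠ 0 := ne_of_apply_ne derivative (by rwa [derivative_zero])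
  refine Finset.card_le_diff_of_interleaved fun x hx y hy hxy hxy' => ?_
  rw [Multiset.mem_toFinset, Multiset.mem_filter, mem_roots hp] at hx hy
  obtain ⟨z, hz1, hz2⟩ := exists_deriv_eq_zero hxy p.continuousOn (hx.1.trans hy.1.symm)
  refine ⟨z, ?_, hz1.1, hz1.2⟩
  rw [Multiset.mem_toFinset, Multiset.mem_filter, mem_roots hp']
  exact ⟨by rwa [IsRoot, ← p.deriv], lt_trans hx.2 hz1.1⟩

/-- Positive-roots version of `Polynomial.card_roots_le_derivative`. -/
private lemma posB (p : ℝ[X]) :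
    Multiset.card (p.roots.filter (fun x => 0 < x)) ≤
      Multiset.card ((derivative p).roots.filter (fun x => 0 < x)) + 1 := by
  rcases eq_or_ne (derivative p) 0 with hp' | hp'
  · rw [eq_C_of_derivative_eq_zero hp', roots_C]
    simp
  have hp : p ≠ 0 := ne_of_apply_ne derivative (by rwa [derivative_zero])
  set S := (p.roots.filter (fun x => 0 < x)).toFinset with hS
  set T := ((derivative p).roots.filter (fun x => 0 < x)).toFinset with hT
  have hcount : ∀ x ∈ S, (p.roots.filter (fun x => 0 < x)).count x = p.rootMultiplicity x := by
    intro x hx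
    have hxpos : 0 < x := (Multiset.mem_filter.1 (Multiset.mem_toFinset.1 hx)).2
    rw [Multiset.count_filter, if_pos hxpos, count_roots]
  have hcount' : ∀ x : ℝ, 0 < x →
      ((derivative p).roots.filter (fun x => 0 < x)).count x
        = (derivative p).rootMultiplicity x := by
    intro x hxpos
    rw [Multiset.count_filter, if_pos hxpos, count_roots]
  calc
    Multiset.card (p.roots.filter (fun x => 0 < x))
        = ∑ x ∈ S, (p.roots.filter (fun x => 0 < x)).count x :=
      (Multiset.toFinset_sum_count_eq _).symm
    _ = ∑ x ∈ S, (p.rootMultiplicity x - 1 + 1) := by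
      refine Finset.sum_congr rfl fun x hx => ?_
      rw [hcount x hx]
      refine (tsub_add_cancel_of_le ?_).symm
      rw [← count_roots]
      exact Nat.succ_le_iff.2 (Multiset.count_pos.2
        (Multiset.mem_filter.1 (Multiset.mem_toFinset.1 hx)).1)
    _ = (∑ x ∈ S, (p.rootMultiplicity x - 1)) + S.card := by
      simp only [Finset.sum_add_distrib, Finset.card_eq_sum_ones]
    _ ≤ (∑ x ∈ S, (derivative p).rootMultiplicity x) + ((T \ S).card + 1) :=
      add_le_add
        (Finset.sum_le_sum fun _ _ =>
          rootMultiplicity_sub_one_le_derivative_rootMultiplicity _ _)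
        (posA p)
    _ ≤ (∑ x ∈ S, ((derivative p).roots.filter (fun x => 0 < x)).count x) +
          ((∑ x ∈ T \ S, ((derivative p).roots.filter (fun x => 0 < x)).count x) + 1) := by
      refine add_le_add ?_ (Nat.add_le_add_right ?_ _)
      · refine Finset.sum_le_sum fun x hx => ?_
        have hxpos : 0 < x := (Multiset.mem_filter.1 (Multiset.mem_toFinset.1 hx)).2
        rw [hcount' x hxpos]
      · rw [Finset.card_eq_sum_ones]
        refine Finset.sum_le_sum fun x hx => ?_
        refine Nat.succ_le_iff.2 (Multiset.count_pos.2 ?_)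
        exact Multiset.mem_toFinset.1 (Finset.mem_sdiff.1 hx).1
    _ ≤ Multiset.card ((derivative p).roots.filter (fun x => 0 < x)) + 1 := by
      have h : (∑ x ∈ S, ((derivative p).roots.filter (fun x => 0 < x)).count x) +
          (∑ x ∈ T \ S, ((derivative p).roots.filter (fun x => 0 < x)).count x) =
          ∑ x ∈ S ∪ T \ S, ((derivative p).roots.filter (fun x => 0 < x)).count x :=
        (Finset.sum_union Finset.disjoint_sdiff).symm
      have h2 := sum_count_le (S ∪ T \ S) ((derivative p).roots.filter (fun x => 0 < x))
      omega

/-- Descartes-type bound: a nonzero polynomial with at most `n + 1` terms has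
at most `n` positive roots counted with multiplicity. -/
private lemma key : ∀ n : ℕ, ∀ f : ℝ[X], f ≠ 0 → f.support.card ≤ n + 1 →
    Multiset.card (f.roots.filter (fun x => 0 < x)) ≤ n := by
  intro n
  induction n with
  | zero =>
    intro f hf0 hsupp
    have h1 : f.support.card = 1 :=
      le_antisymm hsupp (Finset.card_pos.2 (nonempty_support_iff.2 hf0))
    obtain ⟨k, a, ha, rfl⟩ := Polynomial.card_support_eq_one.1 h1
    have : (C a * X ^ k : ℝ[X]).roots.filter (fun x => 0 < x) = 0 := by
      rw [Multiset.filter_eq_nil]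
      intro x hx
      have hroot : IsRoot (C a * X ^ k) x := (mem_roots hf0).1 hx
      simp only [IsRoot, eval_mul, eval_C, eval_pow, eval_X, mul_eq_zero,
        pow_eq_zero_iff'] at hroot
      rcases hroot with h | ⟨h, -⟩
      · exact absurd h ha
      · simp [h]
    simp [this]
  | succ n ih =>
    intro f hf0 hsupp
    -- factor out the trailing `X`-power
    set k := f.natTrailingDegree with hk
    have hdvd : (X : ℝ[X]) ^ k ∣ f :=
      X_pow_dvd_iff.2 fun d hd => coeff_eq_zero_of_lt_natTrailingDegree hd
    obtain ⟨g, hg⟩ := hdvd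
    have hg0 : g ≠ 0 := by rintro rfl; simp at hg; exact hf0 hg
    have hgc0 : g.coeff 0 ≠ 0 := by
      have h1 : f.coeff k = g.coeff 0 := by
        rw [hg]
        simpa using coeff_X_pow_mul g k 0
      rw [← h1, hk]
      exact trailingCoeff_nonzero_iff_nonzero.2 hf0
    -- positive roots of f = positive roots of g
    have hroots : f.roots.filter (fun x => 0 < x) = g.roots.filter (fun x => 0 < x) := by
      rw [hg, roots_mul (hg ▸ hf0), roots_pow, roots_X, Multiset.filter_add]
      have : ((k • ({0} : Multiset ℝ)).filter (fun x => 0 < x)) = 0 := by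
        rw [Multiset.filter_eq_nil]
        intro x hx
        rw [Multiset.mem_nsmul] at hx
        rcases hx with ⟨-, hx⟩
        rw [Multiset.mem_singleton] at hx
        simp [hx]
      rw [this, zero_add]
    -- support of g is no bigger than support of f
    have hgsupp : g.support.card ≤ n + 2 := by
      refine le_trans ?_ hsupp
      refine Finset.card_le_card_of_injOn (· + k) ?_ ?_
      · intro x hx
        rw [Finset.mem_coe, mem_support_iff] at hx ⊢
        show f.coeff (x + k) ≠ 0
        rwa [hg, coeff_X_pow_mul g k x]
      · intro a _ b _ h
        have h' : a + k = b + k := h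
        omega
    rcases eq_or_ne (derivative g) 0 with hg' | hg'
    · -- g is constant, so no roots at all
      have := eq_C_of_derivative_eq_zero hg'
      rw [hroots, this, roots_C]
      simp
    · -- derivative of g has one fewer term
      have hdsupp : (derivative g).support.card ≤ n + 1 := by
        have hsub : (derivative g).support.card ≤ (g.support.erase 0).card := by
          refine Finset.card_le_card_of_injOn (· + 1) ?_ ?_
          · intro x hx
            rw [Finset.mem_coe, mem_support_derivative] at hx
            exact Finset.mem_coe.2 (Finset.mem_erase.2 ⟨Nat.succ_ne_zero x, hx⟩)
          · intro a _ b _ h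
            have h' : a + 1 = b + 1 := h
            omega
        have h0 : (0 : ℕ) ∈ g.support := mem_support_iff.2 hgc0
        rw [Finset.card_erase_of_mem h0] at hsub
        omega
      have h1 := ih (derivative g) hg' hdsupp
      have h2 := posB g
      rw [hroots]
      omega

/-- Every non-zero polynomial in the span of `t^{m_0}, …, t^{m_n}` (with
`m_0 > ⋯ > m_n ≥ 0`) has at most `n` strictly positive roots, counted with
multiplicity. -/
theorem stmt_10 (n : ℕ) (m : Fin (n + 1) → ℕ) (hm : StrictAnti m) (f : ℝ[X])
    (hf : f ∈ Submodule.span ℝ (Set.range fun i => (X : ℝ[X]) ^ m i))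
    (hf0 : f ≠ 0) :
    Multiset.card (f.roots.filter (fun x => 0 < x)) ≤ n := by
  have hsupp : f.support ⊆ Finset.image m Finset.univ := by
    clear hf0
    induction hf using Submodule.span_induction with
    | mem x hx =>
      obtain ⟨i, rfl⟩ := hx
      intro d hd
      rw [support_X_pow (R := ℝ), Finset.mem_singleton] at hd
      subst hd
      exact Finset.mem_image.2 ⟨i, Finset.mem_univ i, rfl⟩
    | zero => simp
    | add x y _ _ hx hy =>
      exact (support_add).trans (Finset.union_subset hx hy)
    | smul c x _ hx =>
      exact (support_smul c x).trans hx
  refine key n f hf0 ?_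
  calc f.support.card ≤ (Finset.image m Finset.univ).card := Finset.card_le_card hsupp
    _ ≤ (Finset.univ : Finset (Fin (n+1))).card := Finset.card_image_le
    _ = n + 1 := by simp
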